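/- Let 𝒞 be a Fraïssé class and let U be its Fraïssé limit. Then U has a universal homogeneous endomorphism if and only if 𝒞 has the amalgamated extension property and the homo amalgamation property (HAP). -/

import Mathlib

universe u v w

open FirstOrder FirstOrder.Language CategoryTheory

namespace UHomog

variable (L : FirstOrder.Language.{u, v})

/-- The class `𝒞̄` of countable structures whose age is contained in `K`. -/
def InBar (K : Set (Bundled.{w} L.Structure)) (A : Type w) [L.Structure A] : Prop :=
  Countable A ∧ L.age A ⊆ K

/-- A homomorphism `u : U → T` is universal within `𝒞̄ = K̄` if every homomorphism from a member
of `K̄` to `T` factors through an embedding into `U`. -/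
def IsUniversalHom (K : Set (Bundled.{w} L.Structure)) {U T : Type w}
    [L.Structure U] [L.Structure T] (u : U →[L] T) : Prop :=
  ∀ A : Bundled.{w} L.Structure, InBar L K A → ∀ h : A →[L] T,
    ∃ ι : A ↪[L] U, ∀ a : A, u (ι a) = h a

/-- A homomorphism `u : U → T` is homogeneous if every embedding of a finitely generated
substructure of `U` into `U` compatible with `u` extends to an automorphism of `U` compatible
with `u`. -/
def IsHomogeneousHom {U T : Type w} [L.Structure U] [L.Structure T] (u : U →[L] T) : Prop :=
  ∀ S : L.Substructure U, S.FG → ∀ ι : S ↪[L] U,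
    (∀ s : S, u (ι s) = u s) →
    ∃ α : U ≃[L] U, (∀ x : U, u (α x) = u x) ∧ ∀ s : S, α s = ι s

/-- An age: a class of finitely generated structures with countably many isomorphism types,
closed under isomorphism, with the hereditary property and the joint embedding property. -/
def IsAge (K : Set (Bundled.{w} L.Structure)) : Prop :=
  K.Nonempty ∧
  (∀ M : Bundled.{w} L.Structure, M ∈ K → Structure.FG L M) ∧
  (∀ M N : Bundled.{w} L.Structure, Nonempty (M ≃[L] N) → (M ∈ K ↔ N ∈ K)) ∧
  (∃ S : Set (Bundled.{w} L.Structure), S.Countable ∧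
    ∀ M ∈ K, ∃ N ∈ S, Nonempty (M ≃[L] N)) ∧
  Hereditary K ∧ JointEmbedding K

/-- The square `g₁ ∘ f₁ = g₂ ∘ f₂` is a pushout square in the category of countable structures
with age contained in `K`, with homomorphisms as morphisms. -/
def IsPushoutSquare (K : Set (Bundled.{w} L.Structure)) {A B₁ B₂ C : Type w}
    [L.Structure A] [L.Structure B₁] [L.Structure B₂] [L.Structure C]
    (f₁ : A ↪[L] B₁) (f₂ : A ↪[L] B₂) (g₁ : B₁ →[L] C) (g₂ : B₂ →[L] C) : Prop :=
  g₁.comp f₁.toHom = g₂.comp f₂.toHom ∧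
  ∀ D : Bundled.{w} L.Structure, InBar L K D → ∀ (k₁ : B₁ →[L] D) (k₂ : B₂ →[L] D),
    k₁.comp f₁.toHom = k₂.comp f₂.toHom →
    ∃! m : C →[L] D, m.comp g₁ = k₁ ∧ m.comp g₂ = k₂

/-- A strict Fraïssé class: a Fraïssé class in which every span of embeddings can be completed to
a canonical (pushout) amalgam. -/
def IsStrictFraisse (K : Set (Bundled.{w} L.Structure)) : Prop :=
  IsFraisse K ∧
  ∀ A B₁ B₂ : Bundled.{w} L.Structure, A ∈ K → B₁ ∈ K → B₂ ∈ K →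
    ∀ (f₁ : A ↪[L] B₁) (f₂ : A ↪[L] B₂),
      ∃ (C : Bundled.{w} L.Structure) (g₁ : B₁ →[L] C) (g₂ : B₂ →[L] C),
        C ∈ K ∧ IsPushoutSquare L K f₁ f₂ g₁ g₂

/-- A Fraïssé class `K₀` is free in the strict Fraïssé class `K` if it is closed with respect to
canonical (pushout) amalgams in `K`. -/
def IsFreeIn (K₀ K : Set (Bundled.{w} L.Structure)) : Prop :=
  K₀ ⊆ K ∧
  ∀ A B₁ B₂ : Bundled.{w} L.Structure, A ∈ K₀ → B₁ ∈ K₀ → B₂ ∈ K₀ →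
    ∀ (f₁ : A ↪[L] B₁) (f₂ : A ↪[L] B₂),
      ∃ (C : Bundled.{w} L.Structure) (g₁ : B₁ →[L] C) (g₂ : B₂ →[L] C),
        C ∈ K₀ ∧ IsPushoutSquare L K f₁ f₂ g₁ g₂

/-- The amalgamated extension property. -/
def AmalgamatedExtension (K : Set (Bundled.{w} L.Structure)) : Prop :=
  ∀ A B₁ B₂ T : Bundled.{w} L.Structure, A ∈ K → B₁ ∈ K → B₂ ∈ K → T ∈ K →
    ∀ (f₁ : A ↪[L] B₁) (f₂ : A ↪[L] B₂) (h₁ : B₁ →[L] T) (h₂ : B₂ →[L] T),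
      h₁.comp f₁.toHom = h₂.comp f₂.toHom →
      ∃ (C T' : Bundled.{w} L.Structure) (g₁ : B₁ ↪[L] C) (g₂ : B₂ ↪[L] C)
        (k : T ↪[L] T') (h : C →[L] T'),
        C ∈ K ∧ T' ∈ K ∧ g₁.comp f₁ = g₂.comp f₂ ∧
        h.comp g₁.toHom = k.toHom.comp h₁ ∧ h.comp g₂.toHom = k.toHom.comp h₂

/-- The homo amalgamation property (HAP). -/
def HAP (K : Set (Bundled.{w} L.Structure)) : Prop :=
  ∀ A B₁ B₂ : Bundled.{w} L.Structure, A ∈ K → B₁ ∈ K → B₂ ∈ K →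
    ∀ (f₁ : A ↪[L] B₁) (f₂ : A →[L] B₂),
      ∃ (C : Bundled.{w} L.Structure) (g₁ : B₁ →[L] C) (g₂ : B₂ ↪[L] C),
        C ∈ K ∧ g₁.comp f₁.toHom = g₂.toHom.comp f₂

/-- A homomorphism `r : A → B` is a retraction if it has a section. -/
def IsRetraction {A B : Type w} [L.Structure A] [L.Structure B] (r : A →[L] B) : Prop :=
  ∃ ι : B →[L] A, ∀ b : B, r (ι b) = b

end UHomog

namespace UHomogProof

open UHomog Substructure

variable {L : FirstOrder.Language.{u, v}}

section Helpers

variable {M : Type w} {N : Type w} [L.Structure M] [L.Structure N]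

/-- pointwise form of `≤` for partial equivs -/
lemma peLeApply {f g : M ≃ₚ[L] N} (h : f ≤ g) {x : M} (hx : x ∈ f.dom) :
    (g.toEquiv ⟨x, PartialEquiv.dom_le_dom h hx⟩ : N) = f.toEquiv ⟨x, hx⟩ := by
  have := PartialEquiv.subtype_toEquiv_inclusion h
  have h2 := DFunLike.congr_fun this ⟨x, hx⟩
  simpa using h2

lemma hom_eq_of_closure_empty (hA : closure L (∅ : Set M) = ⊤) (g₁ g₂ : M →[L] N) :
    g₁ = g₂ :=
  Hom.eq_of_eqOn_dense hA (by simp [Set.EqOn])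

lemma closure_empty_bot_struct :
    closure L (∅ : Set (↥(⊥ : L.Substructure M))) = ⊤ := by
  apply Substructure.map_injective_of_injective
    (f := (⊥ : L.Substructure M).subtype.toHom)
    (by simpa using (⊥ : L.Substructure M).subtype.injective)
  rw [Substructure.map_closure]
  simp only [Set.image_empty, Substructure.closure_empty]
  have : Substructure.map (⊥ : L.Substructure M).subtype.toHom ⊤ =
      (⊥ : L.Substructure M).subtype.toHom.range := by
    rw [Hom.range_eq_map]
  rw [this, Substructure.range_subtype]

lemma fg_le_chain {D : ℕ → L.Substructure M} (mono : ∀ {m n}, m ≤ n → D m ≤ D n)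
    (total : ∀ x : M, ∃ n, x ∈ D n) {S : L.Substructure M} (hS : S.FG) :
    ∃ n, S ≤ D n := by
  obtain ⟨t, ht⟩ := hS
  refine ⟨t.sup fun x => (total x).choose, ?_⟩
  rw [← ht, Substructure.closure_le]
  intro x hx
  exact mono (Finset.le_sup (by exact_mod_cast hx)) ((total x).choose_spec)

end Helpers

section Construction

variable [Countable (Σ l, L.Functions l)]
variable {K : Set (Bundled.{w} L.Structure)} {U : Type w} [L.Structure U] [Countable U]

/-- extension property of the Fraïssé limit: any embedding of a f.g. substructure `T ≤ U`
into some `C ∈ K` can be inverted by an embedding of `C` into `U`. -/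
lemma realize (hU : IsFraisseLimit K U) {C : Bundled.{w} L.Structure} (hC : C ∈ K)
    {T : L.Substructure U} (hT : T.FG) (g : ↥T ↪[L] C) :
    ∃ j : C ↪[L] U, ∀ t : ↥T, j (g t) = ↑t := by
  have fgT : Structure.FG L ↥T := (fg_iff_structure_fg T).1 hT
  have hCa : C ∈ L.age U := hU.age ▸ hC
  have : Nonempty (C ↪[L] U) := hCa.2
  obtain ⟨j, hj⟩ := hU.ultrahomogeneous.extend_embedding fgT T.subtype g
  exact ⟨j, fun t => (DFunLike.congr_fun hj t).symm⟩

/-- A partial homomorphism on `U` with finitely generated domain. -/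
structure PHom (L : FirstOrder.Language.{u, v}) (U : Type w) [L.Structure U] where
  dom : L.Substructure U
  fg : dom.FG
  toHom : ↥dom →[L] U

/-- Extension of partial homomorphisms -/
def Ext (p q : PHom L U) : Prop :=
  ∃ h : p.dom ≤ q.dom, ∀ x : ↥p.dom, q.toHom (Substructure.inclusion h x) = p.toHom x

lemma Ext.refl (p : PHom L U) : Ext p p :=
  ⟨le_rfl, fun x => congrArg p.toHom (Subtype.ext (Eq.refl _))⟩

lemma Ext.trans {p q r : PHom L U} (h₁ : Ext p q) (h₂ : Ext q r) : Ext p r := by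
  obtain ⟨l₁, e₁⟩ := h₁
  obtain ⟨l₂, e₂⟩ := h₂
  refine ⟨l₁.trans l₂, fun x => ?_⟩
  have : (Substructure.inclusion (l₁.trans l₂) x) =
      Substructure.inclusion l₂ (Substructure.inclusion l₁ x) := Subtype.ext (Eq.refl _)
  rw [this, e₂, e₁]

lemma step0 (hU : IsFraisseLimit K U) (hap : HAP L K) (p : PHom L U) (a : U) :
    ∃ q : PHom L U, Ext p q ∧ a ∈ q.dom := by
  set D' := p.dom ⊔ closure L {a} with hD'def
  have hD'fg : D'.FG := p.fg.sup (Substructure.fg_closure_singleton a)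
  have hle : p.dom ≤ D' := le_sup_left
  have haD' : a ∈ D' :=
    (le_sup_right : closure L {a} ≤ D') (subset_closure (Set.mem_singleton a))
  have hDmem : Bundled.mk ↥p.dom ∈ K := hU.age ▸ age.fg_substructure p.fg
  have hD'mem : Bundled.mk ↥D' ∈ K := hU.age ▸ age.fg_substructure hD'fg
  set T0 : L.Substructure U := p.toHom.range with hT0def
  have hT0fg : T0.FG := Structure.FG.range ((fg_iff_structure_fg _).1 p.fg) p.toHom
  have hT0mem : Bundled.mk ↥T0 ∈ K := hU.age ▸ age.fg_substructure hT0fg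
  obtain ⟨C, g₁, g₂, hC, hsq⟩ := hap (Bundled.mk ↥p.dom) (Bundled.mk ↥D') (Bundled.mk ↥T0)
    hDmem hD'mem hT0mem (Substructure.inclusion hle)
    (Hom.codRestrict T0 p.toHom fun c => p.toHom.mem_range_self c)
  obtain ⟨j, hj⟩ := realize hU hC hT0fg g₂
  refine ⟨⟨D', hD'fg, j.toHom.comp g₁⟩, ⟨hle, fun x => ?_⟩, haD'⟩
  have hx := DFunLike.congr_fun hsq x
  simp only [Hom.comp_apply, Embedding.coe_toHom] at hx ⊢
  rw [hx, hj]
  rfl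

lemma step1 (hU : IsFraisseLimit K U) (aep : AmalgamatedExtension L K) (p : PHom L U)
    {B : Bundled.{w} L.Structure} (hB : B ∈ K) {S : L.Substructure B} (hS : S.FG)
    (h : B →[L] U) (ι₀ : ↥S ↪[L] U)
    (hmem : ∀ s : ↥S, ι₀ s ∈ p.dom)
    (hval : ∀ s : ↥S, p.toHom ⟨ι₀ s, hmem s⟩ = h ↑s) :
    ∃ q : PHom L U, Ext p q ∧ ∃ ι : B ↪[L] U, (∀ s : ↥S, ι ↑s = ι₀ s) ∧
      ∀ b : B, ∃ hb : ι b ∈ q.dom, q.toHom ⟨ι b, hb⟩ = h b := by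
  have hBage : B ∈ L.age U := hU.age ▸ hB
  have hBfgs : Structure.FG L B := hBage.1
  have hSfgs : Structure.FG L ↥S := (fg_iff_structure_fg S).1 hS
  have hSmem : Bundled.mk ↥S ∈ K :=
    hU.age ▸ ⟨hSfgs, ⟨hBage.2.some.comp S.subtype⟩⟩
  have hDmem : Bundled.mk ↥p.dom ∈ K := hU.age ▸ age.fg_substructure p.fg
  set T0 : L.Substructure U := p.toHom.range ⊔ h.range with hT0def
  have hT0fg : T0.FG :=
    (Structure.FG.range ((fg_iff_structure_fg _).1 p.fg) p.toHom).sup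
      (Structure.FG.range hBfgs h)
  have hT0mem : Bundled.mk ↥T0 ∈ K := hU.age ▸ age.fg_substructure hT0fg
  -- the span and cocone data
  set f₁ : ↥S ↪[L] ↥p.dom := FirstOrder.Language.Embedding.codRestrict p.dom ι₀ hmem with hf₁def
  set h₁ : ↥p.dom →[L] ↥T0 :=
    Hom.codRestrict T0 p.toHom (fun c => (le_sup_left : p.toHom.range ≤ T0) (p.toHom.mem_range_self c)) with hh₁def
  set h₂ : B →[L] ↥T0 :=
    Hom.codRestrict T0 h (fun c => (le_sup_right : h.range ≤ T0) (h.mem_range_self c)) with hh₂def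
  have hsq : h₁.comp f₁.toHom = h₂.comp (S.subtype : ↥S ↪[L] B).toHom := by
    ext s
    show p.toHom (f₁ s) = h ↑s
    have hfs : f₁ s = ⟨ι₀ s, hmem s⟩ := rfl
    rw [hfs]
    exact hval s
  obtain ⟨C, T', g₁, g₂, k, hh, hC, hT', hg, hhg1, hhg2⟩ :=
    aep (Bundled.mk ↥S) (Bundled.mk ↥p.dom) B (Bundled.mk ↥T0)
      hSmem hDmem hB hT0mem f₁ S.subtype h₁ h₂ hsq
  obtain ⟨jT, hjT⟩ := realize hU hT' hT0fg k
  obtain ⟨jC, hjC⟩ := realize hU hC p.fg g₁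
  have hCfgs : Structure.FG L C := (hU.age ▸ hC : C ∈ L.age U).1
  set Dq : L.Substructure U := jC.toHom.range with hDqdef
  have hDqfg : Dq.FG := Structure.FG.range hCfgs jC.toHom
  set uq : ↥Dq →[L] U := (jT.toHom.comp hh).comp jC.equivRange.symm.toHom with huqdef
  have hkey : ∀ c : C, jC.equivRange.symm ⟨jC c, jC.toHom.mem_range_self c⟩ = c := by
    intro c
    have : (⟨jC c, jC.toHom.mem_range_self c⟩ : ↥Dq) = jC.equivRange c :=
      Subtype.ext (by simp [Embedding.equivRange_apply])
    rw [this]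
    exact jC.equivRange.symm_apply_apply c
  have hle : p.dom ≤ Dq := by
    intro x hx
    have : jC (g₁ ⟨x, hx⟩) = x := hjC ⟨x, hx⟩
    exact this ▸ jC.toHom.mem_range_self _
  refine ⟨⟨Dq, hDqfg, uq⟩, ⟨hle, fun x => ?_⟩, jC.comp g₂, fun s => ?_, fun b => ?_⟩
  · -- extension of p
    have h1 : (Substructure.inclusion hle x : ↥Dq) = ⟨jC (g₁ x), jC.toHom.mem_range_self _⟩ :=
      Subtype.ext (by simpa using (hjC x).symm)
    have h2 := DFunLike.congr_fun hhg1 x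
    simp only [Hom.comp_apply, Embedding.coe_toHom] at h2
    show jT.toHom (hh (jC.equivRange.symm.toHom ((Substructure.inclusion hle) x))) = _
    rw [h1]
    show jT (hh (jC.equivRange.symm ⟨jC (g₁ x), _⟩)) = _
    rw [hkey, h2, hjT]
    rfl
  · -- ι extends ι₀
    have h3 := DFunLike.congr_fun hg s
    simp only [Embedding.comp_apply] at h3 ⊢
    have : (S.subtype s : B) = ↑s := rfl
    rw [this] at h3
    rw [← h3, hjC]
    rfl
  · -- values of the new map
    refine ⟨jC.toHom.mem_range_self _, ?_⟩
    have h4 := DFunLike.congr_fun hhg2 b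
    simp only [Hom.comp_apply, Embedding.coe_toHom] at h4
    show jT (hh (jC.equivRange.symm ⟨jC (g₂ b), _⟩)) = _
    rw [hkey, h4, hjT]
    rfl

end Construction

section Chain

variable [Countable (Σ l, L.Functions l)]
variable {K : Set (Bundled.{w} L.Structure)} {U : Type w} [L.Structure U] [Countable U]

variable (L U) in
/-- The data of a task for the construction: a finitely generated substructure `B` of `U`
(a proxy for an arbitrary member of `K`), a finitely generated substructure `S` of `B`,
a homomorphism `h : B → U` and an embedding `ι₀ : S ↪ U`. -/
def RTask : Type _ :=
  Σ (B : {S : L.Substructure U // S.FG}) (S : {T : L.Substructure ↥B.1 // T.FG}),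
    (↥B.1 →[L] U) × (↥S.1 ↪[L] U)

instance : Countable (RTask L U) := by
  unfold RTask
  haveI I1 : Countable {S : L.Substructure U // S.FG} :=
    Substructure.countable_fg_substructures_of_countable
  haveI I2 : ∀ B : {S : L.Substructure U // S.FG}, Countable (↥B.1 →[L] U) :=
    fun B => Structure.FG.countable_hom U ((fg_iff_structure_fg _).1 B.2)
  haveI I3 : ∀ (B : {S : L.Substructure U // S.FG})
      (S : {T : L.Substructure ↥B.1 // T.FG}), Countable (↥S.1 ↪[L] U) :=
    fun B S => Structure.FG.countable_embedding U ((fg_iff_structure_fg _).1 S.2)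
  haveI I4 : ∀ B : {S : L.Substructure U // S.FG},
      Countable {T : L.Substructure ↥B.1 // T.FG} :=
    fun B => Substructure.countable_fg_substructures_of_countable
  infer_instance

instance : Nonempty (RTask L U) :=
  ⟨⟨⟨⊥, Substructure.fg_bot⟩, ⟨⊥, Substructure.fg_bot⟩,
    ((⊥ : L.Substructure U).subtype.toHom,
      (⊥ : L.Substructure U).subtype.comp (Substructure.subtype _))⟩⟩

/-- The task is ready at stage `p`. -/
def TaskReady (p : PHom L U) (t : RTask L U) : Prop :=
  ∃ hm : ∀ s : ↥t.2.1.1, t.2.2.2 s ∈ p.dom,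
    ∀ s : ↥t.2.1.1, p.toHom ⟨t.2.2.2 s, hm s⟩ = t.2.2.1 ↑s

/-- The task has been completed at stage `p`. -/
def TaskDone (p : PHom L U) (t : RTask L U) : Prop :=
  ∃ ι : ↥t.1.1 ↪[L] U, (∀ s : ↥t.2.1.1, ι ↑s = t.2.2.2 s) ∧
    ∀ b : ↥t.1.1, ∃ hb : ι b ∈ p.dom, p.toHom ⟨ι b, hb⟩ = t.2.2.1 b

lemma exists_step (hU : IsFraisseLimit K U) (hap : HAP L K)
    (aep : AmalgamatedExtension L K) (p : PHom L U) (t : RTask L U ⊕ U) :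
    ∃ q : PHom L U, Ext p q ∧ (∀ a, t = .inr a → a ∈ q.dom) ∧
      (∀ r, t = .inl r → TaskReady p r → TaskDone q r) := by
  cases t with
  | inr a =>
    obtain ⟨q, h1, h2⟩ := step0 hU hap p a
    refine ⟨q, h1, fun a' ha' => ?_, fun r hr => by simp at hr⟩
    obtain rfl : a = a' := Sum.inr.inj ha'
    exact h2
  | inl r =>
    by_cases hr : TaskReady p r
    · obtain ⟨hm, hv⟩ := hr
      obtain ⟨q, hq, ι, hι, hval⟩ := step1 hU aep p
        (B := Bundled.mk ↥r.1.1) (hU.age ▸ age.fg_substructure r.1.2)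
        (S := r.2.1.1) r.2.1.2 r.2.2.1 r.2.2.2 hm hv
      refine ⟨q, hq, fun a ha => by simp at ha, fun r' hr' _ => ?_⟩
      obtain rfl : r = r' := Sum.inl.inj hr'
      exact ⟨ι, hι, hval⟩
    · refine ⟨p, Ext.refl p, fun a ha => by simp at ha, fun r' hr' hready => ?_⟩
      obtain rfl : r = r' := Sum.inl.inj hr'
      exact absurd hready hr

/-- The key richness property of the endomorphism we construct. -/
def Rich (K : Set (Bundled.{w} L.Structure)) {U : Type w} [L.Structure U]
    (u : U →[L] U) : Prop :=
  ∀ B : Bundled.{w} L.Structure, B ∈ K → ∀ S : L.Substructure B, S.FG →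
    ∀ (h : B →[L] U) (ι₀ : ↥S ↪[L] U), (∀ s : ↥S, u (ι₀ s) = h ↑s) →
      ∃ ι : B ↪[L] U, (∀ s : ↥S, ι ↑s = ι₀ s) ∧ ∀ b : B, u (ι b) = h b

lemma exists_rich (hU : IsFraisseLimit K U) (hap : HAP L K)
    (aep : AmalgamatedExtension L K) :
    ∃ u : U →[L] U, Rich K u := by
  classical
  obtain ⟨σ0, hσ0⟩ := exists_surjective_nat (RTask L U ⊕ U)
  set σ : ℕ → RTask L U ⊕ U := fun n => σ0 (Nat.unpair n).1 with hσdef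
  have hσ : ∀ (t : RTask L U ⊕ U) (m : ℕ), ∃ n, m ≤ n ∧ σ n = t := by
    intro t m
    obtain ⟨k, hk⟩ := hσ0 t
    exact ⟨Nat.pair k m, Nat.right_le_pair k m, by simp [hσdef, Nat.unpair_pair, hk]⟩
  -- the chain
  set c : ℕ → PHom L U := fun n =>
    Nat.rec ⟨⊥, Substructure.fg_bot, (⊥ : L.Substructure U).subtype.toHom⟩
      (fun n p => (exists_step hU hap aep p (σ n)).choose) n with hcdef
  have hspec : ∀ n, Ext (c n) (c (n + 1)) ∧ (∀ a, σ n = .inr a → a ∈ (c (n + 1)).dom) ∧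
      (∀ r, σ n = .inl r → TaskReady (c n) r → TaskDone (c (n + 1)) r) := fun n =>
    (exists_step hU hap aep (c n) (σ n)).choose_spec
  have hmono : ∀ {m n}, m ≤ n → Ext (c m) (c n) := by
    intro m n h
    induction n, h using Nat.le_induction with
    | base => exact Ext.refl _
    | succ n _ ih => exact ih.trans (hspec n).1
  have hdmono : ∀ {m n}, m ≤ n → (c m).dom ≤ (c n).dom := fun h => (hmono h).1
  have total : ∀ x : U, ∃ n, x ∈ (c n).dom := by
    intro x
    obtain ⟨n, _, hn⟩ := hσ (.inr x) 0
    exact ⟨n + 1, (hspec n).2.1 x hn⟩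
  set F : U → U := fun x => (c (Nat.find (total x))).toHom ⟨x, Nat.find_spec (total x)⟩
    with hFdef
  have agree : ∀ (n : ℕ) (x : U) (hx : x ∈ (c n).dom), F x = (c n).toHom ⟨x, hx⟩ := by
    intro n x hx
    have hmn : Nat.find (total x) ≤ n := Nat.find_min' (total x) hx
    obtain ⟨hle, he⟩ := hmono hmn
    have : (Substructure.inclusion hle ⟨x, Nat.find_spec (total x)⟩ : ↥(c n).dom) = ⟨x, hx⟩ :=
      Subtype.ext (Eq.refl _)
    rw [hFdef]
    dsimp only
    rw [← he ⟨x, Nat.find_spec (total x)⟩, this]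
  -- `F` is a homomorphism
  set u : U →[L] U :=
    { toFun := F
      map_fun' := by
        intro n f x
        set N : ℕ := Finset.univ.sup fun i => Nat.find (total (x i)) with hNdef
        have hxN : ∀ i, x i ∈ (c N).dom := fun i =>
          hdmono (Finset.le_sup (Finset.mem_univ i)) (Nat.find_spec (total (x i)))
        have hfm : Structure.funMap f x ∈ (c N).dom :=
          (c N).dom.fun_mem f x hxN
        rw [agree N _ hfm]
        have : (⟨Structure.funMap f x, hfm⟩ : ↥(c N).dom) =
            Structure.funMap f (fun i => (⟨x i, hxN i⟩ : ↥(c N).dom)) :=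
          Subtype.ext (Eq.refl _)
        rw [this, (c N).toHom.map_fun]
        congr 1
        funext i
        exact (agree N (x i) (hxN i)).symm
      map_rel' := by
        intro n r x hx
        set N : ℕ := Finset.univ.sup fun i => Nat.find (total (x i)) with hNdef
        have hxN : ∀ i, x i ∈ (c N).dom := fun i =>
          hdmono (Finset.le_sup (Finset.mem_univ i)) (Nat.find_spec (total (x i)))
        have hrel : Structure.RelMap r (fun i => (⟨x i, hxN i⟩ : ↥(c N).dom)) := hx
        have := (c N).toHom.map_rel r _ hrel
        convert this using 2
        funext i
        exact agree N (x i) (hxN i) } with hudef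
  have hu : ∀ x : U, u x = F x := fun _ => rfl
  refine ⟨u, ?_⟩
  -- richness
  intro B hB S hS h ι₀ hcompat
  have hBage : B ∈ L.age U := hU.age ▸ hB
  obtain ⟨hBfg, ⟨eB⟩⟩ := hBage
  set B' : L.Substructure U := eB.toHom.range with hB'def
  have hB'fg : B'.FG := Structure.FG.range hBfg eB.toHom
  set φ : B ≃[L] ↥B' := eB.equivRange with hφdef
  set S' : L.Substructure ↥B' := S.map φ.toEmbedding.toHom with hS'def
  have hS'fg : S'.FG := Substructure.FG.map φ.toEmbedding.toHom hS
  set ψ : ↥S ≃[L] ↥S' := φ.toEmbedding.substructureEquivMap S with hψdef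
  have hψcoe : ∀ s : ↥S, (↑(ψ s) : ↥B') = φ ↑s := fun s =>
    φ.toEmbedding.substructureEquivMap_apply S s
  have hψsymm : ∀ s' : ↥S', (↑(ψ.symm s') : B) = φ.symm ↑s' := by
    intro s'
    have h1 : (↑(ψ (ψ.symm s')) : ↥B') = φ ↑(ψ.symm s') := hψcoe _
    rw [ψ.apply_symm_apply] at h1
    have h2 := congrArg φ.symm h1
    rw [φ.symm_apply_apply] at h2
    exact h2.symm
  set t : RTask L U := ⟨⟨B', hB'fg⟩, ⟨S', hS'fg⟩,
    (h.comp φ.symm.toHom, ι₀.comp ψ.symm.toEmbedding)⟩ with htdef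
  -- find a stage where the task is ready
  have hrangefg : (ι₀.comp ψ.symm.toEmbedding).toHom.range.FG :=
    Structure.FG.range ((fg_iff_structure_fg _).1 hS'fg) _
  obtain ⟨n₀, hn₀⟩ := fg_le_chain (fun h => hdmono h) total hrangefg
  obtain ⟨n, hn₀n, hσn⟩ := hσ (.inl t) n₀
  have hmem : ∀ s' : ↥S', ι₀ (ψ.symm s') ∈ (c n).dom := fun s' =>
    hdmono hn₀n (hn₀ ((ι₀.comp ψ.symm.toEmbedding).toHom.mem_range_self s'))
  have hready : TaskReady (c n) t := by
    refine ⟨hmem, fun s' => ?_⟩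
    show (c n).toHom ⟨ι₀ (ψ.symm s'), _⟩ = (h.comp φ.symm.toHom) ↑s'
    rw [← agree n _ (hmem s')]
    show F (ι₀ (ψ.symm s')) = h (φ.symm ↑s')
    rw [← hu, hcompat (ψ.symm s'), hψsymm s']
  obtain ⟨ι', hι'ext, hι'val⟩ := (hspec n).2.2 t hσn hready
  refine ⟨ι'.comp φ.toEmbedding, fun s => ?_, fun b => ?_⟩
  · show ι' (φ ↑s) = ι₀ s
    have h1 : (φ ↑s : ↥B') = ↑(ψ s) := (hψcoe s).symm
    have h2 : (φ.toEmbedding ↑s : ↥B') = φ ↑s := rfl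
    show ι' ⟨φ ↑s, (φ ↑s).2⟩ = ι₀ s
    have h3 := hι'ext (ψ s)
    show ι' (φ ↑s) = ι₀ s
    calc ι' (φ ↑s) = ι' ↑(ψ s) := by rw [h1]
      _ = (ι₀.comp ψ.symm.toEmbedding) (ψ s) := h3
      _ = ι₀ (ψ.symm (ψ s)) := rfl
      _ = ι₀ s := by rw [ψ.symm_apply_apply]
  · show u (ι' (φ b)) = h b
    obtain ⟨hb, hval⟩ := hι'val (φ b)
    rw [hu, agree (n + 1) _ hb, hval]
    show h (φ.symm (φ b)) = h b
    rw [φ.symm_apply_apply]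

end Chain

section RichConsequences

variable [Countable (Σ l, L.Functions l)]
variable {K : Set (Bundled.{w} L.Structure)} {U : Type w} [L.Structure U] [Countable U]

/-- One-point extension of compatible partial embeddings, from richness. -/
lemma rich_extend {u : U →[L] U} (hu : Rich K u)
    {A : Type w} [L.Structure A] (hage : L.age A ⊆ K) (hh : A →[L] U)
    (f : A ≃ₚ[L] U) (hfg : f.dom.FG)
    (hcompat : ∀ x : ↥f.dom, u (f.toEquiv x) = hh ↑x) (a : A) :
    ∃ g : A ≃ₚ[L] U, g.dom.FG ∧ f ≤ g ∧ a ∈ g.dom ∧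
      ∀ x : ↥g.dom, u (g.toEquiv x) = hh ↑x := by
  set B₀ : L.Substructure A := f.dom ⊔ closure L {a} with hB₀def
  have hB₀fg : B₀.FG := hfg.sup (Substructure.fg_closure_singleton a)
  have hle : f.dom ≤ B₀ := le_sup_left
  have haB₀ : a ∈ B₀ :=
    (le_sup_right : closure L {a} ≤ B₀) (subset_closure (Set.mem_singleton a))
  have hBmem : Bundled.mk ↥B₀ ∈ K := hage (age.fg_substructure hB₀fg)
  set S : L.Substructure ↥B₀ := (Substructure.inclusion hle).toHom.range with hSdef
  have hSfg : S.FG :=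
    Structure.FG.range ((fg_iff_structure_fg _).1 hfg) _
  set e : ↥f.dom ≃[L] ↥S := (Substructure.inclusion hle).equivRange with hedef
  have hecoe : ∀ x : ↥f.dom, ((e x : ↥B₀) : A) = ↑x := by
    intro x
    have : (e x : ↥B₀) = Substructure.inclusion hle x :=
      (Substructure.inclusion hle).equivRange_apply x
    rw [this]
    rfl
  set ι₀ : ↥S ↪[L] U := f.toEmbedding.comp e.symm.toEmbedding with hι₀def
  set hb : ↥B₀ →[L] U := hh.comp B₀.subtype.toHom with hbdef
  have hcompat' : ∀ s : ↥S, u (ι₀ s) = hb ↑s := by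
    intro s
    show u (f.toEmbedding (e.symm s)) = hh ↑(↑s : ↥B₀)
    have h1 : ((e (e.symm s) : ↥B₀) : A) = ↑(e.symm s) := hecoe _
    rw [e.apply_symm_apply] at h1
    have h2 := hcompat (e.symm s)
    rw [← h1] at h2
    exact h2
  obtain ⟨ι, hιext, hιval⟩ := hu (Bundled.mk ↥B₀) hBmem S hSfg hb ι₀ hcompat'
  refine ⟨⟨B₀, ι.toHom.range, ι.equivRange⟩, hB₀fg, ?_, haB₀, ?_⟩
  · refine ⟨hle, ?_⟩
    ext x
    show ι (Substructure.inclusion hle x) = f.toEquiv x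
    have h2 : (Substructure.inclusion hle x : ↥B₀) = ↑(e x) :=
      ((Substructure.inclusion hle).equivRange_apply x).symm ▸ rfl
    have h3 : ι ↑(e x) = ι₀ (e x) := hιext (e x)
    have h4 : ι₀ (e x) = f.toEmbedding (e.symm (e x)) := rfl
    rw [h2, h3, h4, e.symm_apply_apply]
    rfl
  · intro x
    show u (ι x) = hh ↑x
    rw [hιval x]
    rfl

lemma rich_universal (hU : IsFraisseLimit K U) {u : U →[L] U} (hu : Rich K u) :
    IsUniversalHom L K u := by
  classical
  intro A hA h
  obtain ⟨hAcount, hAage⟩ := hA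
  haveI : Countable A := hAcount
  haveI : Encodable A := Encodable.ofCountable _
  -- base partial equivalence, defined on the substructure generated by ∅
  have hPmem : Bundled.mk ↥(⊥ : L.Substructure A) ∈ K :=
    hAage (age.fg_substructure Substructure.fg_bot)
  obtain ⟨j₀⟩ := (hU.age ▸ hPmem : Bundled.mk ↥(⊥ : L.Substructure A) ∈ L.age U).2
  have hcompat₀ : ∀ x : ↥(⊥ : L.Substructure A), u (j₀.equivRange x) = h ↑x := by
    have := hom_eq_of_closure_empty (closure_empty_bot_struct (M := A))
      (u.comp ((Substructure.subtype _).toHom.comp j₀.equivRange.toHom))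
      (h.comp (⊥ : L.Substructure A).subtype.toHom)
    intro x
    exact DFunLike.congr_fun this x
  set Q := {f : A ≃ₚ[L] U // f.dom.FG ∧ ∀ x : ↥f.dom, u (f.toEquiv x) = h ↑x} with hQdef
  set g₀ : Q := ⟨⟨⊥, j₀.toHom.range, j₀.equivRange⟩, Substructure.fg_bot, hcompat₀⟩
    with hg₀def
  have hext : ∀ (f : Q) (a : A), ∃ g : Q, f.1 ≤ g.1 ∧ a ∈ g.1.dom := by
    intro f a
    obtain ⟨g, h1, h2, h3, h4⟩ := rich_extend hu hAage h f.1 f.2.1 f.2.2 a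
    exact ⟨⟨g, h1, h4⟩, h2, h3⟩
  set D : A → Order.Cofinal Q := fun a =>
    ⟨{f | a ∈ f.1.dom}, fun f => by
      obtain ⟨g, h1, h2⟩ := hext f a
      exact ⟨g, h2, h1⟩⟩ with hDdef
  set seq := Order.sequenceOfCofinals g₀ D with hseqdef
  set Sc : ℕ →o A ≃ₚ[L] U :=
    ⟨fun n => (seq n).1, fun _ _ hmn => Order.sequenceOfCofinals.monotone g₀ D hmn⟩
    with hScdef
  set F := DirectLimit.partialEquivLimit Sc with hFdef
  have hdomtop : F.dom = ⊤ := by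
    rw [eq_top_iff]
    intro a _
    have hmem : a ∈ (Sc (Encodable.encode a + 1)).dom :=
      Order.sequenceOfCofinals.encode_mem g₀ D a
    exact PartialEquiv.dom_le_dom
      (DirectLimit.le_partialEquivLimit Sc (Encodable.encode a + 1)) hmem
  refine ⟨PartialEquiv.toEmbeddingOfEqTop hdomtop, ?_⟩
  intro a
  have hmem : a ∈ (Sc (Encodable.encode a + 1)).dom :=
    Order.sequenceOfCofinals.encode_mem g₀ D a
  have h1 : (PartialEquiv.toEmbeddingOfEqTop hdomtop) a =
      F.toEquiv ⟨a, hdomtop.symm ▸ Substructure.mem_top a⟩ :=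
    PartialEquiv.toEmbeddingOfEqTop_apply hdomtop a
  have h2 := peLeApply (DirectLimit.le_partialEquivLimit Sc (Encodable.encode a + 1)) hmem
  have h3 : F.toEquiv ⟨a, hdomtop.symm ▸ Substructure.mem_top a⟩ =
      F.toEquiv ⟨a, PartialEquiv.dom_le_dom
        (DirectLimit.le_partialEquivLimit Sc (Encodable.encode a + 1)) hmem⟩ := by
    congr 1
  rw [h1, h3, h2]
  exact (seq (Encodable.encode a + 1)).2.2 ⟨a, hmem⟩

lemma symm_compat {u : U →[L] U} {f : U ≃ₚ[L] U}
    (hc : ∀ x : ↥f.dom, u (f.toEquiv x) = u ↑x) :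
    ∀ y : ↥f.symm.dom, u (f.symm.toEquiv y) = u ↑y := by
  intro y
  have h1 := hc (f.toEquiv.symm y)
  erw [f.toEquiv.apply_symm_apply] at h1
  exact h1.symm

lemma rich_homog (hU : IsFraisseLimit K U) {u : U →[L] U} (hu : Rich K u) :
    IsHomogeneousHom L u := by
  classical
  intro S₀ hS₀ ι hι
  haveI : Encodable (U ⊕ U) := Encodable.ofCountable _
  have hageU : L.age U ⊆ K := le_of_eq hU.age
  set Q := {f : U ≃ₚ[L] U // f.dom.FG ∧ ∀ x : ↥f.dom, u (f.toEquiv x) = u ↑x} with hQdef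
  set g₀ : Q := ⟨⟨S₀, ι.toHom.range, ι.equivRange⟩, hS₀, by
    intro x
    show u (ι.equivRange x) = u ↑x
    have : ((ι.equivRange x : ↥ι.toHom.range) : U) = ι x := ι.equivRange_apply x
    rw [this]
    exact hι x⟩ with hg₀def
  have hextL : ∀ (f : Q) (a : U), ∃ g : Q, f.1 ≤ g.1 ∧ a ∈ g.1.dom := by
    intro f a
    obtain ⟨g, h1, h2, h3, h4⟩ := rich_extend hu hageU u f.1 f.2.1 f.2.2 a
    exact ⟨⟨g, h1, h4⟩, h2, h3⟩
  have hextR : ∀ (f : Q) (b : U), ∃ g : Q, f.1 ≤ g.1 ∧ b ∈ g.1.cod := by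
    intro f b
    have hsymfg : f.1.symm.dom.FG := (f.1.dom_fg_iff_cod_fg).1 f.2.1
    obtain ⟨g, h1, h2, h3, h4⟩ := rich_extend hu hageU u f.1.symm hsymfg
      (symm_compat f.2.2) b
    refine ⟨⟨g.symm, (g.dom_fg_iff_cod_fg).1 h1, symm_compat h4⟩, ?_, h3⟩
    exact PartialEquiv.monotone_symm h2
  set D : U ⊕ U → Order.Cofinal Q := fun p =>
    Sum.recOn p
      (fun a => ⟨{f | a ∈ f.1.dom}, fun f => by
        obtain ⟨g, h1, h2⟩ := hextL f a
        exact ⟨g, h2, h1⟩⟩)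
      (fun b => ⟨{f | b ∈ f.1.cod}, fun f => by
        obtain ⟨g, h1, h2⟩ := hextR f b
        exact ⟨g, h2, h1⟩⟩) with hDdef
  set seq := Order.sequenceOfCofinals g₀ D with hseqdef
  set Sc : ℕ →o U ≃ₚ[L] U :=
    ⟨fun n => (seq n).1, fun _ _ hmn => Order.sequenceOfCofinals.monotone g₀ D hmn⟩
    with hScdef
  set F := DirectLimit.partialEquivLimit Sc with hFdef
  have hdomtop : F.dom = ⊤ := by
    rw [eq_top_iff]
    intro a _
    exact PartialEquiv.dom_le_dom
      (DirectLimit.le_partialEquivLimit Sc (Encodable.encode (Sum.inl a : U ⊕ U) + 1))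
      (Order.sequenceOfCofinals.encode_mem g₀ D (Sum.inl a))
  have hcodtop : F.cod = ⊤ := by
    rw [eq_top_iff]
    intro b _
    exact PartialEquiv.cod_le_cod
      (DirectLimit.le_partialEquivLimit Sc (Encodable.encode (Sum.inr b : U ⊕ U) + 1))
      (Order.sequenceOfCofinals.encode_mem g₀ D (Sum.inr b))
  set α := PartialEquiv.toEquivOfEqTop hdomtop hcodtop with hαdef
  have hαapp : ∀ (x : U) (n : ℕ) (hx : x ∈ (Sc n).dom),
      α x = (Sc n).toEquiv ⟨x, hx⟩ := by
    intro x n hx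
    have h1 : α x = (α.toEmbedding : U → U) x := rfl
    rw [h1, PartialEquiv.toEquivOfEqTop_toEmbedding hdomtop hcodtop]
    have h2 := PartialEquiv.toEmbeddingOfEqTop_apply hdomtop x
    rw [h2]
    have h4 := peLeApply (DirectLimit.le_partialEquivLimit Sc n) hx
    have h3 : F.toEquiv ⟨x, hdomtop.symm ▸ Substructure.mem_top x⟩ =
        F.toEquiv ⟨x, PartialEquiv.dom_le_dom
          (DirectLimit.le_partialEquivLimit Sc n) hx⟩ := by congr 1
    rw [h3, h4]
  refine ⟨α, ?_, ?_⟩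
  · intro x
    have hx : x ∈ (Sc (Encodable.encode (Sum.inl x : U ⊕ U) + 1)).dom :=
      Order.sequenceOfCofinals.encode_mem g₀ D (Sum.inl x)
    rw [hαapp x _ hx]
    exact (seq (Encodable.encode (Sum.inl x : U ⊕ U) + 1)).2.2 ⟨x, hx⟩
  · intro s
    have hs : (↑s : U) ∈ (Sc 0).dom := s.2
    rw [hαapp ↑s 0 hs]
    show (ι.equivRange ⟨↑s, hs⟩ : U) = ι s
    have h5 : (ι.equivRange ⟨↑s, hs⟩ : U) = ι ⟨↑s, hs⟩ := ι.equivRange_apply _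
    rw [h5]

end RichConsequences

section Forward

variable [Countable (Σ l, L.Functions l)]
variable {K : Set (Bundled.{w} L.Structure)} {U : Type w} [L.Structure U] [Countable U]

lemma inbar_of_mem (hU : IsFraisseLimit K U) {X : Bundled.{w} L.Structure} (hX : X ∈ K) :
    InBar L K X := by
  obtain ⟨hfg, ⟨e⟩⟩ := (hU.age ▸ hX : X ∈ L.age U)
  exact ⟨Structure.cg_iff_countable.1 hfg.cg, hU.age ▸ e.age_subset_age⟩

lemma forward_hap (hU : IsFraisseLimit K U) {u : U →[L] U}
    (huni : IsUniversalHom L K u) : HAP L K := by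
  intro A B₁ B₂ hA hB₁ hB₂ f₁ f₂
  obtain ⟨hAfg, ⟨eA⟩⟩ := (hU.age ▸ hA : A ∈ L.age U)
  obtain ⟨hB₁fg, ⟨e₁⟩⟩ := (hU.age ▸ hB₁ : B₁ ∈ L.age U)
  obtain ⟨hB₂fg, ⟨e₂⟩⟩ := (hU.age ▸ hB₂ : B₂ ∈ L.age U)
  obtain ⟨ιA, hιA⟩ := huni A (inbar_of_mem hU hA) (e₂.toHom.comp f₂)
  haveI : Nonempty (B₁ ↪[L] U) := ⟨e₁⟩
  obtain ⟨j, hj⟩ := hU.ultrahomogeneous.extend_embedding hAfg ιA f₁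
  set C₀ : L.Substructure U := (u.comp j.toHom).range ⊔ e₂.toHom.range with hC₀def
  have hC₀fg : C₀.FG := (Structure.FG.range hB₁fg _).sup (Structure.FG.range hB₂fg _)
  refine ⟨Bundled.mk ↥C₀,
    Hom.codRestrict C₀ (u.comp j.toHom)
      (fun b => (le_sup_left : _ ≤ C₀) ((u.comp j.toHom).mem_range_self b)),
    FirstOrder.Language.Embedding.codRestrict C₀ e₂
      (fun b => (le_sup_right : _ ≤ C₀) (e₂.toHom.mem_range_self b)),
    hU.age ▸ age.fg_substructure hC₀fg, ?_⟩
  ext a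
  show u (j (f₁ a)) = e₂ (f₂ a)
  have h1 : ιA a = j (f₁ a) := DFunLike.congr_fun hj a
  rw [← h1, hιA a]
  rfl

lemma forward_aep (hU : IsFraisseLimit K U) {u : U →[L] U}
    (huni : IsUniversalHom L K u) (hhom : IsHomogeneousHom L u) :
    AmalgamatedExtension L K := by
  intro A B₁ B₂ T hA hB₁ hB₂ hT f₁ f₂ h₁ h₂ hsq
  obtain ⟨hAfg, ⟨eA⟩⟩ := (hU.age ▸ hA : A ∈ L.age U)
  obtain ⟨hB₁fg, _⟩ := (hU.age ▸ hB₁ : B₁ ∈ L.age U)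
  obtain ⟨hB₂fg, _⟩ := (hU.age ▸ hB₂ : B₂ ∈ L.age U)
  obtain ⟨hTfg, ⟨eT⟩⟩ := (hU.age ▸ hT : T ∈ L.age U)
  obtain ⟨ι₁, hι₁⟩ := huni B₁ (inbar_of_mem hU hB₁) (eT.toHom.comp h₁)
  obtain ⟨ι₂, hι₂⟩ := huni B₂ (inbar_of_mem hU hB₂) (eT.toHom.comp h₂)
  set a₁ : A ↪[L] U := ι₁.comp f₁ with ha₁def
  set a₂ : A ↪[L] U := ι₂.comp f₂ with ha₂def
  have hua : ∀ x : A, u (a₁ x) = u (a₂ x) := by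
    intro x
    have hx := DFunLike.congr_fun hsq x
    show u (ι₁ (f₁ x)) = u (ι₂ (f₂ x))
    rw [hι₁ (f₁ x), hι₂ (f₂ x)]
    exact congrArg eT hx
  set S : L.Substructure U := a₁.toHom.range with hSdef
  have hSfg : S.FG := Structure.FG.range hAfg a₁.toHom
  set ιS : ↥S ↪[L] U := a₂.comp a₁.equivRange.symm.toEmbedding with hιSdef
  have hkey : ∀ x : A, a₁.equivRange.symm ⟨a₁ x, a₁.toHom.mem_range_self x⟩ = x := by
    intro x
    have : (⟨a₁ x, a₁.toHom.mem_range_self x⟩ : ↥S) = a₁.equivRange x :=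
      Subtype.ext (a₁.equivRange_apply x).symm
    rw [this, a₁.equivRange.symm_apply_apply]
  have hcompat : ∀ s : ↥S, u (ιS s) = u ↑s := by
    rintro ⟨_, x, rfl⟩
    show u (a₂ (a₁.equivRange.symm ⟨a₁ x, _⟩)) = u (a₁ x)
    rw [hkey x]
    exact (hua x).symm
  obtain ⟨α, hα1, hα2⟩ := hhom S hSfg ιS hcompat
  set g1 : B₁ ↪[L] U := α.toEmbedding.comp ι₁ with hg1def
  have hsq1 : ∀ x : A, g1 (f₁ x) = ι₂ (f₂ x) := by
    intro x
    show α (a₁ x) = a₂ x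
    have h3 := hα2 ⟨a₁ x, a₁.toHom.mem_range_self x⟩
    have h4 : ((⟨a₁ x, a₁.toHom.mem_range_self x⟩ : ↥S) : U) = a₁ x := rfl
    rw [h4] at h3
    rw [h3]
    show a₂ (a₁.equivRange.symm ⟨a₁ x, _⟩) = a₂ x
    rw [hkey x]
  set C₀ : L.Substructure U := g1.toHom.range ⊔ ι₂.toHom.range with hC₀def
  have hC₀fg : C₀.FG := (Structure.FG.range hB₁fg _).sup (Structure.FG.range hB₂fg _)
  have hC₀s : Structure.FG L ↥C₀ := (fg_iff_structure_fg _).1 hC₀fg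
  set T'₀ : L.Substructure U := eT.toHom.range ⊔ (u.comp C₀.subtype.toHom).range
    with hT'def
  have hT'fg : T'₀.FG := (Structure.FG.range hTfg _).sup (Structure.FG.range hC₀s _)
  refine ⟨Bundled.mk ↥C₀, Bundled.mk ↥T'₀,
    FirstOrder.Language.Embedding.codRestrict C₀ g1
      (fun b => (le_sup_left : _ ≤ C₀) (g1.toHom.mem_range_self b)),
    FirstOrder.Language.Embedding.codRestrict C₀ ι₂
      (fun b => (le_sup_right : _ ≤ C₀) (ι₂.toHom.mem_range_self b)),
    FirstOrder.Language.Embedding.codRestrict T'₀ eT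
      (fun t => (le_sup_left : _ ≤ T'₀) (eT.toHom.mem_range_self t)),
    Hom.codRestrict T'₀ (u.comp C₀.subtype.toHom)
      (fun c => (le_sup_right : _ ≤ T'₀) ((u.comp C₀.subtype.toHom).mem_range_self c)),
    hU.age ▸ age.fg_substructure hC₀fg, hU.age ▸ age.fg_substructure hT'fg,
    ?_, ?_, ?_⟩
  · ext x
    show g1 (f₁ x) = ι₂ (f₂ x)
    exact hsq1 x
  · ext b
    show u (g1 b) = eT (h₁ b)
    show u (α (ι₁ b)) = eT (h₁ b)
    rw [hα1 (ι₁ b), hι₁ b]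
    rfl
  · ext b
    show u (ι₂ b) = eT (h₂ b)
    rw [hι₂ b]
    rfl

end Forward

end UHomogProof

open UHomog FirstOrder FirstOrder.Language in
/-- Proposition: the Fraïssé limit `U` of `K` has a universal homogeneous endomorphism if and
only if `K` has the amalgamated extension property and the homo amalgamation property (HAP). -/
theorem statement9
    (L : FirstOrder.Language.{u, v})
    [Countable (Σ l, L.Functions l)] [Countable (Σ l, L.Relations l)]
    (K : Set (Bundled.{w} L.Structure)) (hK : IsFraisse K)
    (U : Type w) [L.Structure U] [Countable U] (hU : IsFraisseLimit K U) :
    (∃ u : U →[L] U, IsUniversalHom L K u ∧ IsHomogeneousHom L u) ↔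
      (AmalgamatedExtension L K ∧ HAP L K) := by
  constructor
  · rintro ⟨u, huni, hhom⟩
    exact ⟨UHomogProof.forward_aep hU huni hhom, UHomogProof.forward_hap hU huni⟩
  · rintro ⟨aep, hap⟩
    obtain ⟨u, hu⟩ := UHomogProof.exists_rich hU hap aep
    exact ⟨u, UHomogProof.rich_universal hU hu, UHomogProof.rich_homog hU hu⟩
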